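/- Let C_k = x_1 x_2 … x_k x_1 (k ≥ 2) be a non-Hamiltonian directed cycle in a digraph D, and let Q = y_1 y_2 … y_r (r ≥ 1) be a directed path in the subdigraph of D induced by V(D) ∖ V(C_k). If d^-(y_1, V(C_k)) + d^+(y_r, V(C_k)) ≥ k + 1, then for every m with r+1 ≤ m ≤ k+r the digraph D contains a directed cycle C_m of length m with vertex set V(C_m) ⊆ V(C_k) ∪ V(Q). -/

import Mathlib

/-!
Basic definitions for finite digraphs (no loops, no multiple arcs), where the arc
relation is `A : V → V → Prop`.  Paths and cycles are given as lists of (distinct)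
vertices.
-/

variable {V : Type*}

/-- A (directed) path, given by the list of its vertices. -/
def IsPathOn (A : V → V → Prop) (l : List V) : Prop :=
  l ≠ [] ∧ l.Nodup ∧ l.Chain' A

/-- A (directed) cycle, given by the list of its vertices; its length (number of
arcs) equals the length of the list. -/
def IsCycleOn (A : V → V → Prop) (l : List V) : Prop :=
  2 ≤ l.length ∧ l.Nodup ∧ l.Chain' A ∧
    ∀ a ∈ l.getLast?, ∀ b ∈ l.head?, A a b

/-- A directed path from `a` to `b`. -/
def IsPathFromTo (A : V → V → Prop) (l : List V) (a b : V) : Prop :=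
  IsPathOn A l ∧ l.head? = some a ∧ l.getLast? = some b

/-- Out-degree `d⁺(x)`. -/
noncomputable def outDeg (A : V → V → Prop) (x : V) : ℕ := {y | A x y}.ncard

/-- In-degree `d⁻(x)`. -/
noncomputable def inDeg (A : V → V → Prop) (x : V) : ℕ := {y | A y x}.ncard

/-- Degree `d(x) = d⁺(x) + d⁻(x)`. -/
noncomputable def deg (A : V → V → Prop) (x : V) : ℕ := outDeg A x + inDeg A x

/-- Out-degree into a set, `d⁺(x, S)`. -/
noncomputable def outDegOn (A : V → V → Prop) (x : V) (S : Set V) : ℕ :=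
  {y ∈ S | A x y}.ncard

/-- In-degree from a set, `d⁻(x, S)`. -/
noncomputable def inDegOn (A : V → V → Prop) (x : V) (S : Set V) : ℕ :=
  {y ∈ S | A y x}.ncard

/-- Degree with respect to a set, `d(x, S) = d⁺(x, S) + d⁻(x, S)`. -/
noncomputable def degOn (A : V → V → Prop) (x : V) (S : Set V) : ℕ :=
  outDegOn A x S + inDegOn A x S

/-- Two distinct vertices are adjacent if there is an arc between them in some
direction. -/
def DAdj (A : V → V → Prop) (x y : V) : Prop := A x y ∨ A y x

/-- `D` is `S`-strongly connected: between any two distinct vertices of `S` there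
are directed paths in both directions. -/
def SetStronglyConnected (A : V → V → Prop) (S : Set V) : Prop :=
  ∀ x ∈ S, ∀ y ∈ S, x ≠ y → ∃ l, IsPathFromTo A l x y

/-- Strong connectivity. -/
def StronglyConnected (A : V → V → Prop) : Prop :=
  ∀ x y : V, x ≠ y → ∃ l, IsPathFromTo A l x y

/-- 2-strong connectivity: at least 3 vertices, and deleting any vertex leaves a
strongly connected digraph. -/
def TwoStronglyConnected [Fintype V] (A : V → V → Prop) : Prop :=
  3 ≤ Fintype.card V ∧
    ∀ w x y : V, x ≠ w → y ≠ w → x ≠ y → ∃ l, IsPathFromTo A l x y ∧ w ∉ l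

/-- Condition `A₀` for a set `Y` of vertices. -/
def CondA0 [Fintype V] (A : V → V → Prop) (Y : Set V) : Prop :=
  ∀ x ∈ Y, ∀ y ∈ Y, ∀ z ∈ Y,
    x ≠ y → x ≠ z → y ≠ z → ¬ DAdj A x y →
      (¬ A x z →
        deg A x + deg A y + outDeg A x + inDeg A z ≥ 3 * Fintype.card V - 2) ∧
      (¬ A z x →
        deg A x + deg A y + inDeg A x + outDeg A z ≥ 3 * Fintype.card V - 2)

/-- A `C`-bypass: a path of length at least two whose end-vertices lie on the
cycle `c` and whose internal vertices avoid `c`. -/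
def IsBypass (A : V → V → Prop) (c p : List V) : Prop :=
  IsPathOn A p ∧ 3 ≤ p.length ∧
    (∀ a ∈ p.head?, a ∈ c) ∧ (∀ b ∈ p.getLast?, b ∈ c) ∧
    ∀ v ∈ p.tail.dropLast, v ∉ c

/-- The vertex `y` can be inserted into the path `p`. -/
def CanInsert (A : V → V → Prop) (p : List V) (y : V) : Prop :=
  ∃ i, ∃ h : i + 1 < p.length, A (p[i]'(Nat.lt_of_succ_lt h)) y ∧ A y (p[i+1]'h)

/-- A `(C, x)`-path: a path from a vertex `u` of the cycle `c` to `x`, meeting `c`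
only in `u`. -/
def IsCtoXPath (A : V → V → Prop) (c l : List V) (u x : V) : Prop :=
  IsPathFromTo A l u x ∧ u ∈ c ∧ ∀ v ∈ l, v ∈ c → v = u

/-- An `(x, C)`-path: a path from `x` to a vertex `v` of the cycle `c`, meeting `c`
only in `v`. -/
def IsXtoCPath (A : V → V → Prop) (c l : List V) (x v : V) : Prop :=
  IsPathFromTo A l x v ∧ v ∈ c ∧ ∀ w ∈ l, w ∈ c → w = v

/-- Lemma 3.1. -/
theorem cycle_extension_lemma (A : V → V → Prop) (hloops : ∀ v, ¬ A v v)
    (c : List V) (hc : IsCycleOn A c) (hnonham : ∃ v : V, v ∉ c)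
    (q : List V) (hq : IsPathOn A q) (hdisj : ∀ v ∈ q, v ∉ c)
    (y₁ yᵣ : V) (hy₁ : q.head? = some y₁) (hyᵣ : q.getLast? = some yᵣ)
    (hdeg : inDegOn A y₁ {v | v ∈ c} + outDegOn A yᵣ {v | v ∈ c} ≥ c.length + 1) :
    ∀ m, q.length + 1 ≤ m → m ≤ c.length + q.length →
      ∃ l : List V, IsCycleOn A l ∧ l.length = m ∧ ∀ v ∈ l, v ∈ c ∨ v ∈ q := by
    classical
  obtain ⟨hk2, hcnd, hcch, hcwrap⟩ := hc
  obtain ⟨hqne, hqnd, hqch⟩ := hq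
  set k := c.length with hk
  have hkpos : 0 < k := by omega
  set f : ℕ → V := fun i => c.getD (i % k) y₁ with hf
  have hfget : ∀ i, f i = c.get ⟨i % k, Nat.mod_lt _ hkpos⟩ := fun i =>
    List.getD_eq_getElem _ _ _
  have hfval : ∀ (i : ℕ) (h : i < k), f i = c.get ⟨i, h⟩ := by
    intro i h
    rw [hfget]
    congr 1
    exact Fin.ext (Nat.mod_eq_of_lt h)
  have hfmod : ∀ a b : ℕ, a % k = b % k → f a = f b := by
    intro a b h; simp only [hf, h]
  have key : ∀ a b : ℕ, a % k = b % k → a ≤ b → b - a < k → a = b := by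
    intro a b h hle hlt
    have hd : k ∣ b - a := (Nat.modEq_iff_dvd' hle).mp h
    rcases Nat.eq_zero_or_pos (b - a) with h0 | h0
    · omega
    · have := Nat.le_of_dvd h0 hd; omega
  have hfinj : ∀ a b : ℕ, f a = f b → a % k = b % k := by
    intro a b h
    rw [hfget, hfget] at h
    exact (hcnd.getElem_inj_iff).mp h
  -- arcs along the cycle
  have hcget : ∀ i (h : i + 1 < k), A (c.get ⟨i, by omega⟩) (c.get ⟨i+1, h⟩) := by
    have := List.isChain_iff_getElem.mp hcch
    intro i h
    exact this i (by omega)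
  have hA : ∀ i, A (f i) (f (i + 1)) := by
    intro i
    have h1 : (i + 1) % k = (i % k + 1) % k := by
      conv_lhs => rw [Nat.add_mod]
      rw [Nat.mod_eq_of_lt (show 1 < k by omega)]
    by_cases hcase : i % k + 1 < k
    · have h2 : (i % k + 1) % k = i % k + 1 := Nat.mod_eq_of_lt hcase
      rw [hfget, hfget]
      have : (i+1) % k = i % k + 1 := by rw [h1, h2]
      simp only [this]
      exact hcget _ (by omega)
    · have hik : i % k = k - 1 := by have := Nat.mod_lt i hkpos; omega
      have h2 : (i + 1) % k = 0 := by rw [h1, hik]; simp [Nat.sub_add_cancel hkpos]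
      rw [hfget, hfget]
      simp only [h2, hik]
      apply hcwrap
      · rw [List.getLast?_eq_getElem?]
        exact List.getElem?_eq_getElem (by omega)
      · rw [List.head?_eq_getElem?]
        exact List.getElem?_eq_getElem (by omega)
  -- pigeonhole setup
  set In : Finset ℕ := (Finset.range k).filter (fun i => A (f i) y₁) with hIn
  set B : Finset ℕ := (Finset.range k).filter (fun i => A yᵣ (f i)) with hB
  have hmemc : ∀ i, f i ∈ c := fun i => by rw [hfget]; exact List.getElem_mem _
  have hsetIn : {v ∈ {v | v ∈ c} | A v y₁} = ↑(In.image f) := by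
    ext v
    simp only [Set.mem_setOf_eq, Finset.coe_image, Set.mem_image, Finset.mem_coe,
      hIn, Finset.mem_filter, Finset.mem_range]
    constructor
    · rintro ⟨hvc, hv⟩
      obtain ⟨i, hi, hig⟩ := List.getElem_of_mem hvc
      have hfi : f i = v := by rw [hfval i hi]; simpa using hig
      exact ⟨i, ⟨hi, hfi ▸ hv⟩, hfi⟩
    · rintro ⟨i, ⟨hi, hAi⟩, rfl⟩
      exact ⟨hmemc i, hAi⟩
  have hsetB : {v ∈ {v | v ∈ c} | A yᵣ v} = ↑(B.image f) := by
    ext v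
    simp only [Set.mem_setOf_eq, Finset.coe_image, Set.mem_image, Finset.mem_coe,
      hB, Finset.mem_filter, Finset.mem_range]
    constructor
    · rintro ⟨hvc, hv⟩
      obtain ⟨i, hi, hig⟩ := List.getElem_of_mem hvc
      have hfi : f i = v := by rw [hfval i hi]; simpa using hig
      exact ⟨i, ⟨hi, hfi ▸ hv⟩, hfi⟩
    · rintro ⟨i, ⟨hi, hAi⟩, rfl⟩
      exact ⟨hmemc i, hAi⟩
  have hinjOnRange : ∀ s : Finset ℕ, s ⊆ Finset.range k → Set.InjOn f ↑s := by
    intro s hs a ha b hb hab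
    have ha' := Finset.mem_range.mp (hs ha)
    have hb' := Finset.mem_range.mp (hs hb)
    have := hfinj a b hab
    rw [Nat.mod_eq_of_lt ha', Nat.mod_eq_of_lt hb'] at this
    exact this
  have hcardIn : inDegOn A y₁ {v | v ∈ c} = In.card := by
    rw [inDegOn, hsetIn, Set.ncard_coe_finset,
      Finset.card_image_of_injOn (hinjOnRange In (Finset.filter_subset _ _))]
  have hcardB : outDegOn A yᵣ {v | v ∈ c} = B.card := by
    rw [outDegOn, hsetB, Set.ncard_coe_finset,
      Finset.card_image_of_injOn (hinjOnRange B (Finset.filter_subset _ _))]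
  rw [hcardIn, hcardB] at hdeg
  -- main construction
  intro m hm1 hm2
  have hqpos : 0 < q.length := List.length_pos_iff.mpr hqne
  set r := q.length with hr
  set s := m - r - 1 with hs
  have hsk : s < k := by omega
  set As : Finset ℕ := (Finset.range k).filter (fun i => A (f (i + s)) y₁) with hAs
  have hginv : ∀ i < k, ((i + (k - s)) % k + s) % k = i := by
    intro i hi
    rw [Nat.mod_add_mod]
    have : i + (k - s) + s = i + k := by omega
    rw [this, Nat.add_mod_right, Nat.mod_eq_of_lt hi]
  have hcardAs : In.card ≤ As.card := by
    apply Finset.card_le_card_of_injOn (fun i => (i + (k - s)) % k)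
    · intro i hi
      simp only [hIn, Finset.coe_filter, Set.mem_setOf_eq, Finset.mem_range] at hi
      simp only [hAs, Finset.coe_filter, Set.mem_setOf_eq, Finset.mem_range]
      refine ⟨Nat.mod_lt _ hkpos, ?_⟩
      have := hfmod ((i + (k - s)) % k + s) i (by
        rw [hginv i hi.1, Nat.mod_eq_of_lt hi.1])
      rw [this]; exact hi.2
    · intro a ha b hb hab
      have ha' := Finset.mem_range.mp (Finset.filter_subset _ _ ha)
      have hb' := Finset.mem_range.mp (Finset.filter_subset _ _ hb)
      have hab' : (a + (k - s)) % k = (b + (k - s)) % k := hab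
      have : ((a + (k - s)) % k + s) % k = ((b + (k - s)) % k + s) % k := by rw [hab']
      rw [hginv a ha', hginv b hb'] at this
      exact this
  have hBAs : (B ∩ As).Nonempty := by
    rw [← Finset.card_pos]
    have h1 : (B ∪ As).card ≤ k := by
      have : B ∪ As ⊆ Finset.range k := by
        apply Finset.union_subset <;> exact Finset.filter_subset _ _
      simpa using Finset.card_le_card this
    have h2 := Finset.card_union_add_card_inter B As
    omega
  obtain ⟨j, hj⟩ := hBAs
  rw [Finset.mem_inter] at hj
  obtain ⟨hjB, hjAs⟩ := hj
  simp only [hB, Finset.mem_filter, Finset.mem_range] at hjB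
  simp only [hAs, Finset.mem_filter, Finset.mem_range] at hjAs
  obtain ⟨hjk, hArc1⟩ := hjB
  have hArc2 : A (f (j + s)) y₁ := hjAs.2
  -- the tail list on the cycle
  set tl : List V := (List.range (s + 1)).map (fun i => f (j + i)) with htl
  have htlen : tl.length = s + 1 := by simp [htl]
  have htlget : ∀ i (h : i < tl.length), tl[i]'h = f (j + i) := by
    intro i h
    simp [htl]
  have htlne : tl ≠ [] := by
    intro h; rw [h] at htlen; simp at htlen
  -- nodup of tl
  have htlnd : tl.Nodup := by
    rw [List.nodup_iff_injective_get]
    intro ⟨a, ha⟩ ⟨b, hb⟩ hab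
    simp only [List.get_eq_getElem] at hab
    rw [htlget a ha, htlget b hb] at hab
    have hmod := hfinj _ _ hab
    rw [htlen] at ha hb
    have : j + a = j + b := by
      rcases Nat.le_total a b with h | h
      · exact key _ _ hmod (by omega) (by omega)
      · exact (key _ _ hmod.symm (by omega) (by omega)).symm
    simp only [Fin.mk.injEq]
    omega
  -- chain of tl
  have htlch : tl.Chain' A := by
    rw [List.Chain', List.isChain_iff_getElem]
    intro i h
    rw [htlget i (by omega), htlget (i+1) (by omega)]
    rw [← Nat.add_assoc]
    exact hA (j + i)
  -- assemble
  refine ⟨q ++ tl, ⟨?_, ?_, ?_, ?_⟩, ?_, ?_⟩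
  · rw [List.length_append, htlen]; omega
  · refine hqnd.append htlnd ?_
    intro a haq hatl
    obtain ⟨i, hi, hig⟩ := List.getElem_of_mem hatl
    rw [htlget i hi] at hig
    exact hdisj a haq (hig ▸ hmemc (j + i))
  · rw [List.Chain', List.isChain_append]
    refine ⟨hqch, htlch, ?_⟩
    intro x hx y hy
    rw [hyᵣ, Option.mem_some_iff] at hx
    have hhd : tl.head? = some (f j) := by
      rw [List.head?_eq_getElem?, List.getElem?_eq_getElem (by omega)]
      rw [htlget 0 (by omega)]
      norm_num
    rw [hhd, Option.mem_some_iff] at hy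
    subst hx; subst hy
    exact hArc1
  · intro a ha b hb
    rw [List.getLast?_append] at ha
    have hlast : tl.getLast? = some (f (j + s)) := by
      rw [List.getLast?_eq_getElem?, htlen]
      simp only [Nat.add_sub_cancel]
      rw [List.getElem?_eq_getElem (by omega), htlget s (by omega)]
    rw [hlast] at ha
    simp only [Option.some_or, Option.mem_some_iff] at ha
    rw [List.head?_append, hy₁] at hb
    have hor : (Option.some y₁).or tl.head? = some y₁ := rfl
    rw [hor, Option.mem_some_iff] at hb
    subst ha; subst hb
    exact hArc2
  · rw [List.length_append, htlen]; omega
  · intro v hv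
    rw [List.mem_append] at hv
    rcases hv with hv | hv
    · right; exact hv
    · left
      obtain ⟨i, hi, hig⟩ := List.getElem_of_mem hv
      rw [htlget i hi] at hig
      exact hig ▸ hmemc (j + i)
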